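/- For d = 5, the lower bound formula d(d²+3d+14)/24 + 1 evaluates to 59/4 + 1, whose ceiling is 13, and the paper's construction shows m(Q_5;4) ≤ 14; hence the set S_4^5 of 14 explicitly listed vertices percolates under the 4-neighbour bootstrap process on Q_5. -/

import Mathlib

open Finset

/-- One step of the r-neighbour bootstrap process on the d-dimensional hypercube
(vertices: `Fin d → Bool`, adjacency: Hamming distance 1). -/
def bootStep (d r : ℕ) (A : Finset (Fin d → Bool)) : Finset (Fin d → Bool) :=
  A ∪ Finset.univ.filter (fun v =>
    r ≤ ((Finset.univ.filter (fun w => hammingDist v w = 1)) ∩ A).card)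

/-- `A` percolates under the r-neighbour bootstrap process on `Q_d`. -/
def Percolates (d r : ℕ) (A : Finset (Fin d → Bool)) : Prop :=
  ∃ t : ℕ, (bootStep d r)^[t] A = Finset.univ

/-- `m(Q_d; r)`: minimum cardinality of a percolating set. -/
noncomputable def mQ (d r : ℕ) : ℕ :=
  sInf {n : ℕ | ∃ A : Finset (Fin d → Bool), A.card = n ∧ Percolates d r A}

/-- The explicit 14-element set `S_4^5` of vertices of `Q_5`. -/
def S45 : Finset (Fin 5 → Bool) :=
  {
    ![false, false, false, false, true], ![false, false, true, false, false],
    ![false, false, true, true, true], ![false, true, false, true, false],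
    ![false, true, false, true, true], ![false, true, true, false, true],
    ![false, true, true, true, false], ![true, false, false, false, false],
    ![true, false, false, true, true], ![true, false, true, false, true],
    ![true, false, true, true, false], ![true, true, false, false, true],
    ![true, true, false, true, false], ![true, true, true, false, false]}

/-- The lower-bound formula at `d = 5` evaluates to `45/4 + 1`, whose ceiling is `13`;
the set `S_4^5` has cardinality 14 and percolates under the 4-neighbour bootstrap
process on `Q_5`, whence `m(Q_5; 4) ≤ 14`. -/
theorem stmt18 :
    ((5 * (5 ^ 2 + 3 * 5 + 14) : ℚ) / 24 + 1 = 45 / 4 + 1) ∧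
    (⌈(45 / 4 + 1 : ℚ)⌉ = 13) ∧
    S45.card = 14 ∧ Percolates 5 4 S45 ∧ mQ 5 4 ≤ 14 := by
  refine ⟨by norm_num, by rw [show (45/4+1:ℚ)=49/4 by norm_num, Int.ceil_eq_iff] ; norm_num, by decide, ⟨3, by set_option maxRecDepth 100000 in decide⟩, ?_⟩
  exact Nat.sInf_le ⟨S45, by decide, ⟨3, by set_option maxRecDepth 100000 in decide⟩⟩
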